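/- If K is an edge-path connected abstract simplicial complex, then TC(K) ≤ scat(K Π K), where TC is the discrete topological complexity and scat the simplicial LS-category. -/

import Mathlib

attribute [local instance] Classical.decEq

/-- An abstract simplicial complex on vertex set `V`. -/
structure SC (V : Type) where
  faces : Set (Finset V)
  down_closed : ∀ {σ τ : Finset V}, σ ∈ faces → τ ⊆ σ → τ.Nonempty → τ ∈ faces

/-- A vertex map inducing a simplicial map `K → L`. -/
def IsSimplicialMap {V W : Type} (K : SC V) (L : SC W) (f : V → W) : Prop :=
  ∀ σ ∈ K.faces, σ.image f ∈ L.faces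

/-- Two maps are contiguous: for each simplex, the union of images is a simplex. -/
def Contiguous {V W : Type} (K : SC V) (L : SC W) (f g : V → W) : Prop :=
  ∀ σ ∈ K.faces, σ.image f ∪ σ.image g ∈ L.faces

/-- Being in the same contiguity class: connected by a finite chain of contiguous maps. -/
def ContigClass {V W : Type} (K : SC V) (L : SC W) : (V → W) → (V → W) → Prop :=
  Relation.ReflTransGen (Contiguous K L)

/-- The categorical product of two simplicial complexes. -/
def prodSC {V W : Type} (K : SC V) (L : SC W) : SC (V × W) where
  faces := {σ | σ.image Prod.fst ∈ K.faces ∧ σ.image Prod.snd ∈ L.faces}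
  down_closed := fun hσ hτσ hne =>
    ⟨K.down_closed hσ.1 (Finset.image_subset_image hτσ) (hne.image _),
     L.down_closed hσ.2 (Finset.image_subset_image hτσ) (hne.image _)⟩

/-- `Ω` is a Farber subcomplex of `K Π K`: a subcomplex admitting a simplicial map
`s : Ω → K` with `Δ ∘ s` in the contiguity class of the inclusion. -/
def IsFarber {V : Type} (K : SC V) (Ω : SC (V × V)) : Prop :=
  Ω.faces ⊆ (prodSC K K).faces ∧
  ∃ s : V × V → V, IsSimplicialMap Ω K s ∧
    ContigClass Ω (prodSC K K) (fun p => (s p, s p)) id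

/-- `K Π K` is covered by `n + 1` Farber subcomplexes. -/
def TCle {V : Type} (K : SC V) (n : ℕ) : Prop :=
  ∃ Ω : Fin (n + 1) → SC (V × V), (∀ i, IsFarber K (Ω i)) ∧
    ∀ σ ∈ (prodSC K K).faces, ∃ i, σ ∈ (Ω i).faces

/-- Discrete topological complexity. -/
noncomputable def TCdisc {V : Type} (K : SC V) : ℕ∞ :=
  sInf {n : ℕ∞ | ∃ m : ℕ, n = (m : ℕ∞) ∧ TCle K m}

/-- A categorical subcomplex: the inclusion is in the contiguity class of a constant map
at a vertex of `K`. -/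
def IsCategorical {V : Type} (K : SC V) (L : SC V) : Prop :=
  L.faces ⊆ K.faces ∧ ∃ v : V, {v} ∈ K.faces ∧ ContigClass L K id (fun _ => v)

/-- `K` is covered by `n + 1` categorical subcomplexes. -/
def scatLe {V : Type} (K : SC V) (n : ℕ) : Prop :=
  ∃ L : Fin (n + 1) → SC V, (∀ i, IsCategorical K (L i)) ∧
    ∀ σ ∈ K.faces, ∃ i, σ ∈ (L i).faces

/-- Normalized simplicial LS-category. -/
noncomputable def scat {V : Type} (K : SC V) : ℕ∞ :=
  sInf {n : ℕ∞ | ∃ m : ℕ, n = (m : ℕ∞) ∧ scatLe K m}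

/-- The preimage subcomplex of a subcomplex `Ω` under a vertex map `f`,
inside an ambient complex `M`. -/
def preimSC {V W : Type} (M : SC W) (Ω : SC V) (f : W → V) : SC W where
  faces := {τ | τ ∈ M.faces ∧ τ.image f ∈ Ω.faces}
  down_closed := fun hσ hτσ hne =>
    ⟨M.down_closed hσ.1 hτσ hne,
     Ω.down_closed hσ.2 (Finset.image_subset_image hτσ) (hne.image _)⟩

/-- `K` and `L` have the same strong homotopy type. -/
def StrongEquiv {V W : Type} (K : SC V) (L : SC W) : Prop :=
  ∃ (φ : V → W) (ψ : W → V), IsSimplicialMap K L φ ∧ IsSimplicialMap L K ψ ∧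
    ContigClass L L (φ ∘ ψ) id ∧ ContigClass K K (ψ ∘ φ) id

/-- `K` is edge-path connected. -/
def EdgeConn {V : Type} (K : SC V) : Prop :=
  ∀ v w : V, {v} ∈ K.faces → {w} ∈ K.faces →
    Relation.ReflTransGen (fun a b => ({a, b} : Finset V) ∈ K.faces) v w

/-- `K` is strongly collapsible: the identity is in the contiguity class of a constant map. -/
def StronglyCollapsible {V : Type} (K : SC V) : Prop :=
  ∃ v : V, {v} ∈ K.faces ∧ ContigClass K K id (fun _ => v)

lemma contiguous_symm {V W : Type} {K : SC V} {L : SC W} {f g : V → W}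
    (h : Contiguous K L f g) : Contiguous K L g f := by
  intro σ hσ
  rw [Finset.union_comm]
  exact h σ hσ

lemma contigClass_symm {V W : Type} {K : SC V} {L : SC W} {f g : V → W}
    (h : ContigClass K L f g) : ContigClass K L g f :=
  (@Relation.ReflTransGen.stdSymm _ _ ⟨fun _ _ hc => contiguous_symm hc⟩).symm _ _ h

lemma const_chain {V : Type} (K : SC V) (Ω : SC (V × V))
    (hΩ : Ω.faces ⊆ (prodSC K K).faces) (v₀ : V) (hv₀ : ({v₀} : Finset V) ∈ K.faces)
    {a b : V}
    (hab : Relation.ReflTransGen (fun x y => ({x, y} : Finset V) ∈ K.faces) a b) :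
    ContigClass Ω (prodSC K K) (fun _ => (v₀, a)) (fun _ => (v₀, b)) := by
  induction hab with
  | refl => exact Relation.ReflTransGen.refl
  | @tail x y _ hxy ih =>
    refine ih.tail ?_
    intro σ hσ
    rcases σ.eq_empty_or_nonempty with rfl | hne
    · simpa using hΩ hσ
    · simp only [Finset.image_const hne]
      refine ⟨?_, ?_⟩
      · simp only [Finset.image_union, Finset.image_singleton, Finset.union_self]
        exact hv₀
      · simp only [Finset.image_union, Finset.image_singleton]
        exact hxy

lemma scatLe_to_TCle {V : Type} (K : SC V) (h : EdgeConn K) (m : ℕ)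
    (hs : scatLe (prodSC K K) m) : TCle K m := by
  obtain ⟨L, hcat, hcov⟩ := hs
  refine ⟨L, fun i => ?_, hcov⟩
  obtain ⟨hsub, ⟨v₀, v₁⟩, hv, hc⟩ := hcat i
  have hv₀ : ({v₀} : Finset V) ∈ K.faces := by
    have := hv.1
    simpa using this
  have hv₁ : ({v₁} : Finset V) ∈ K.faces := by
    have := hv.2
    simpa using this
  refine ⟨hsub, fun _ => v₀, ?_, ?_⟩
  · intro σ hσ
    rcases σ.eq_empty_or_nonempty with rfl | hne
    · have := (hsub hσ).1
      simpa using this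
    · simp only [Finset.image_const hne]; exact hv₀
  · have h1 : ContigClass (L i) (prodSC K K) (fun _ => (v₀, v₀)) (fun _ => (v₀, v₁)) :=
      const_chain K (L i) hsub v₀ hv₀ (h v₀ v₁ hv₀ hv₁)
    exact h1.trans (contigClass_symm hc)

/-- for edge-path connected `K`, `TC K ≤ scat (K Π K)`. -/
theorem TCdisc_le_scat_prod {V : Type} (K : SC V) (h : EdgeConn K) :
    TCdisc K ≤ scat (prodSC K K) := by
  apply sInf_le_sInf
  rintro n ⟨m, rfl, hm⟩
  exact ⟨m, rfl, scatLe_to_TCle K h m hm⟩
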